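/- Let A : ℝ → Matrix (Fin n) (Fin n) ℝ be differentiable at m₀ with A(m₀) invertible, let P be an r×n real matrix, q ∈ ℝⁿ, d ∈ ℝʳ, and define f(m) = (1/2)‖P·A(m)⁻¹·q − d‖² (for m near m₀, where A(m) is invertible). Set u = A(m₀)⁻¹q and v = (A(m₀)ᵀ)⁻¹Pᵀ(Pu − d). Then f is differentiable at m₀ with derivative f′(m₀) = −⟨v, A′(m₀)·u⟩, where A′(m₀) is the derivative of A at m₀ (an n×n matrix) acting on u by matrix-vector multiplication. -/

import Mathlib

open Matrix
open scoped RealInnerProductSpace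

section Aux

attribute [local instance] Matrix.frobeniusNormedRing Matrix.frobeniusNormedAlgebra

private lemma aux_hasDerivAt_matrix {n : ℕ} {A : ℝ → Matrix (Fin n) (Fin n) ℝ}
    {A' : Matrix (Fin n) (Fin n) ℝ} {m₀ : ℝ}
    (hA : ∀ i j, HasDerivAt (fun m => A m i j) (A' i j) m₀) :
    HasDerivAt A A' m₀ := by
  have h : HasDerivAt (fun m => ∑ i : Fin n, ∑ j : Fin n, single i j (A m i j))
      (∑ i : Fin n, ∑ j : Fin n, single i j (A' i j)) m₀ := by
    refine HasDerivAt.fun_sum fun i _ => HasDerivAt.fun_sum fun j _ => ?_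
    simpa using ((hA i j).smul_const (single i j (1 : ℝ)))
  simpa only [← Matrix.matrix_eq_sum_single] using h

private lemma aux_hasDerivAt_inv {n : ℕ} {A : ℝ → Matrix (Fin n) (Fin n) ℝ}
    {A' : Matrix (Fin n) (Fin n) ℝ} {m₀ : ℝ}
    (hA : ∀ i j, HasDerivAt (fun m => A m i j) (A' i j) m₀) (hinv : IsUnit (A m₀)) :
    HasDerivAt (fun m => (A m)⁻¹) (-((A m₀)⁻¹ * A' * (A m₀)⁻¹)) m₀ := by
  have hAd := aux_hasDerivAt_matrix hA
  have h1 := hasFDerivAt_ringInverse (𝕜 := ℝ) hinv.unit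
  rw [hinv.unit_spec] at h1
  have h2 := h1.comp_hasDerivAt m₀ hAd
  have hcoe : (↑hinv.unit⁻¹ : Matrix (Fin n) (Fin n) ℝ) = (A m₀)⁻¹ := by
    conv_rhs => rw [Matrix.nonsing_inv_eq_ringInverse, ← hinv.unit_spec, Ring.inverse_unit]
  have h4 : HasDerivAt (fun m => (A m)⁻¹)
      ((-ContinuousLinearMap.mulLeftRight ℝ _ ↑hinv.unit⁻¹ ↑hinv.unit⁻¹) A') m₀ := by
    simp only [Function.comp_def, ← Matrix.nonsing_inv_eq_ringInverse] at h2
    exact h2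
  convert h4 using 1
  simp [hcoe]

private lemma aux_toEuclideanLin_mul {k l p : ℕ} (M : Matrix (Fin k) (Fin l) ℝ)
    (N : Matrix (Fin l) (Fin p) ℝ) (x : EuclideanSpace ℝ (Fin p)) :
    Matrix.toEuclideanLin (M * N) x = Matrix.toEuclideanLin M (Matrix.toEuclideanLin N x) := by
  simp [Matrix.toEuclideanLin_apply, Matrix.mulVec_mulVec]

/-- Adjoint-state gradient formula for the reduced FWI objective with a single source and a
scalar model parameter: if `A` is differentiable at `m₀` (entrywise, with derivative matrix
`A'`) and `A m₀` is invertible, then `f(m) = (1/2)‖P A(m)⁻¹ q − d‖²` is differentiable at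
`m₀` with derivative `−⟨v, A' u⟩`, where `u = A(m₀)⁻¹ q` is the forward wavefield and
`v = A(m₀)⁻ᵀ Pᵀ (P u − d)` is the adjoint wavefield. -/
theorem stmt_18 {n r : ℕ} (A : ℝ → Matrix (Fin n) (Fin n) ℝ)
    (A' : Matrix (Fin n) (Fin n) ℝ) (m₀ : ℝ)
    (hA : ∀ i j, HasDerivAt (fun m => A m i j) (A' i j) m₀)
    (hinv : IsUnit (A m₀))
    (P : Matrix (Fin r) (Fin n) ℝ)
    (q : EuclideanSpace ℝ (Fin n)) (d : EuclideanSpace ℝ (Fin r))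
    (u v : EuclideanSpace ℝ (Fin n))
    (hu : u = Matrix.toEuclideanLin (A m₀)⁻¹ q)
    (hv : v = Matrix.toEuclideanLin ((A m₀)ᵀ)⁻¹
      (Matrix.toEuclideanLin Pᵀ (Matrix.toEuclideanLin P u - d))) :
    HasDerivAt
      (fun m : ℝ =>
        (1 / 2) * ‖Matrix.toEuclideanLin P (Matrix.toEuclideanLin (A m)⁻¹ q) - d‖ ^ 2)
      (-⟪v, Matrix.toEuclideanLin A' u⟫) m₀ := by
  classical
  have hB : HasDerivAt (fun m => (A m)⁻¹) (-((A m₀)⁻¹ * A' * (A m₀)⁻¹)) m₀ :=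
    aux_hasDerivAt_inv hA hinv
  -- the linear map `M ↦ toEuclideanLin M q`
  let Lq : Matrix (Fin n) (Fin n) ℝ →ₗ[ℝ] EuclideanSpace ℝ (Fin n) :=
    { toFun := fun M => Matrix.toEuclideanLin M q
      map_add' := by intro M N; simp
      map_smul' := by intro c M; simp }
  have hq : HasDerivAt (fun m => Matrix.toEuclideanLin (A m)⁻¹ q)
      (Matrix.toEuclideanLin (-((A m₀)⁻¹ * A' * (A m₀)⁻¹)) q) m₀ :=
    Lq.toContinuousLinearMap.hasFDerivAt.comp_hasDerivAt m₀ hB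
  set B' : EuclideanSpace ℝ (Fin n) :=
    Matrix.toEuclideanLin (-((A m₀)⁻¹ * A' * (A m₀)⁻¹)) q with hB'def
  have hg : HasDerivAt
      (fun m => Matrix.toEuclideanLin P (Matrix.toEuclideanLin (A m)⁻¹ q) - d)
      (Matrix.toEuclideanLin P B') m₀ :=
    ((Matrix.toEuclideanLin P).toContinuousLinearMap.hasFDerivAt.comp_hasDerivAt m₀
      hq).sub_const d
  set g₀ : EuclideanSpace ℝ (Fin r) :=
    Matrix.toEuclideanLin P (Matrix.toEuclideanLin (A m₀)⁻¹ q) - d with hg₀def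
  have hinner : HasDerivAt
      (fun m => (1 / 2 : ℝ) *
        ⟪Matrix.toEuclideanLin P (Matrix.toEuclideanLin (A m)⁻¹ q) - d,
         Matrix.toEuclideanLin P (Matrix.toEuclideanLin (A m)⁻¹ q) - d⟫)
      ((1 / 2 : ℝ) *
        (⟪g₀, Matrix.toEuclideanLin P B'⟫ + ⟪Matrix.toEuclideanLin P B', g₀⟫)) m₀ :=
    (hg.inner ℝ hg).const_mul (1 / 2 : ℝ)
  have hfun : (fun m : ℝ =>
      (1 / 2) * ‖Matrix.toEuclideanLin P (Matrix.toEuclideanLin (A m)⁻¹ q) - d‖ ^ 2)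
      = fun m => (1 / 2 : ℝ) *
        ⟪Matrix.toEuclideanLin P (Matrix.toEuclideanLin (A m)⁻¹ q) - d,
         Matrix.toEuclideanLin P (Matrix.toEuclideanLin (A m)⁻¹ q) - d⟫ := by
    funext m
    rw [real_inner_self_eq_norm_sq]
  rw [hfun]
  convert hinner using 1
  -- now the scalar identity
  have hB'eq : B' = -(Matrix.toEuclideanLin (A m₀)⁻¹ (Matrix.toEuclideanLin A' u)) := by
    rw [hB'def, map_neg, LinearMap.neg_apply, aux_toEuclideanLin_mul,
      aux_toEuclideanLin_mul, ← hu]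
  have hadj₁ : ∀ (x : EuclideanSpace ℝ (Fin r)) (y : EuclideanSpace ℝ (Fin n)),
      ⟪x, Matrix.toEuclideanLin P y⟫ = ⟪Matrix.toEuclideanLin Pᵀ x, y⟫ := by
    intro x y
    rw [← Matrix.conjTranspose_eq_transpose_of_trivial,
      Matrix.toEuclideanLin_conjTranspose_eq_adjoint, LinearMap.adjoint_inner_left]
  have hadj₂ : ∀ (x y : EuclideanSpace ℝ (Fin n)),
      ⟪x, Matrix.toEuclideanLin (A m₀)⁻¹ y⟫
        = ⟪Matrix.toEuclideanLin ((A m₀)ᵀ)⁻¹ x, y⟫ := by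
    intro x y
    rw [← Matrix.transpose_nonsing_inv, ← Matrix.conjTranspose_eq_transpose_of_trivial,
      Matrix.toEuclideanLin_conjTranspose_eq_adjoint, LinearMap.adjoint_inner_left]
  have hgu : g₀ = Matrix.toEuclideanLin P u - d := by rw [hg₀def, hu]
  have key : ⟪g₀, Matrix.toEuclideanLin P B'⟫ = -⟪v, Matrix.toEuclideanLin A' u⟫ := by
    rw [hgu, hB'eq, map_neg, inner_neg_right, hadj₁, hadj₂, ← hv]
  have comm : ⟪Matrix.toEuclideanLin P B', g₀⟫ = ⟪g₀, Matrix.toEuclideanLin P B'⟫ :=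
    real_inner_comm _ _
  rw [comm, key]
  ring
end Aux
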